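/- Let p ∈ ℝⁿ, z ∈ ℝᵐ and δ ∈ ℝ. If for every natural number k ≥ 0 one has ∑_{i=1}^n (pᵢ + δ)^k ≥ ∑_{j=1}^m (zⱼ + δ)^k, then for every real t ≥ 0 one has ∑_{i=1}^n exp(pᵢ t) ≥ ∑_{j=1}^m exp(zⱼ t). -/
import Mathlib

lemma exp_tsum' (x : ℝ) : Real.exp x = ∑' k : ℕ, x ^ k / k.factorial := by
  rw [Real.exp_eq_exp_ℝ, NormedSpace.exp_eq_tsum_div]

lemma summable_exp_series (x : ℝ) : Summable (fun k : ℕ => x ^ k / k.factorial) :=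
  Real.summable_pow_div_factorial x

/-- key step in the proof of Theorem 1.
If all shifted power sums are ordered, `∑ (pᵢ + δ)^k ≥ ∑ (zⱼ + δ)^k` for every
`k ≥ 0`, then `∑ exp(pᵢ t) ≥ ∑ exp(zⱼ t)` for every `t ≥ 0`. -/
theorem stmt_5 (n m : ℕ) (p : Fin n → ℝ) (z : Fin m → ℝ) (δ : ℝ)
    (h : ∀ k : ℕ, ∑ j, (z j + δ) ^ k ≤ ∑ i, (p i + δ) ^ k) :
    ∀ t : ℝ, 0 ≤ t → ∑ j, Real.exp (z j * t) ≤ ∑ i, Real.exp (p i * t) := by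
  intro t ht
  have key : ∑ j, Real.exp ((z j + δ) * t) ≤ ∑ i, Real.exp ((p i + δ) * t) := by
    have hz : ∑ j, Real.exp ((z j + δ) * t)
        = ∑' k : ℕ, ∑ j, ((z j + δ) * t) ^ k / k.factorial := by
      simp_rw [exp_tsum']
      exact (Summable.tsum_finsetSum (fun j _ => summable_exp_series _)).symm
    have hp : ∑ i, Real.exp ((p i + δ) * t)
        = ∑' k : ℕ, ∑ i, ((p i + δ) * t) ^ k / k.factorial := by
      simp_rw [exp_tsum']
      exact (Summable.tsum_finsetSum (fun i _ => summable_exp_series _)).symm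
    rw [hz, hp]
    apply Summable.tsum_le_tsum _ (summable_sum (fun j (_ : j ∈ Finset.univ) => summable_exp_series ((z j + δ) * t)))
      (summable_sum (fun i (_ : i ∈ Finset.univ) => summable_exp_series ((p i + δ) * t)))
    intro k
    have := h k
    simp_rw [mul_pow, ← Finset.sum_div, ← Finset.sum_mul]
    apply div_le_div_of_nonneg_right _ (by positivity)
    exact mul_le_mul_of_nonneg_right this (pow_nonneg ht k)
  have factor : ∀ x : ℝ, Real.exp ((x + δ) * t) = Real.exp (x * t) * Real.exp (δ * t) := by
    intro x; rw [← Real.exp_add]; ring_nf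
  simp_rw [factor, ← Finset.sum_mul] at key
  exact le_of_mul_le_mul_right key (Real.exp_pos _)
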